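/- Let r > 0 and let γ : ℝ → ℝⁿ be a C² unit-speed curve (‖γ'(t)‖ = 1 for all t) with ‖γ''(t)‖ ≤ 1/r for all t ∈ ℝ. Then the extrinsic diameter of the image of γ is at least 2r: there exist s, t ∈ ℝ with ‖γ(s) − γ(t)‖ ≥ 2r; indeed ‖γ(πr) − γ(0)‖ ≥ 2r. -/

import Mathlib

open Real

local notation "⟪" x ", " y "⟫" => @inner ℝ _ _ x y

/-- Comparison lemma, strict perturbed version: if `ψ s = 1` and
`|ψ'| ≤ (1/r)√(1-ψ²)`, then `ψ t > cos (ε + K (t-s))` as long as the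
argument stays in `[ε, π - ε]`, for `K > 1/r`. -/
lemma aux_compB {r : ℝ} (hr : 0 < r) {ψ ψ' : ℝ → ℝ}
    (hψ : ∀ x, HasDerivAt ψ (ψ' x) x)
    (hd : ∀ x, |ψ' x| ≤ (1 / r) * Real.sqrt (1 - ψ x ^ 2))
    {s : ℝ} (hψs : ψ s = 1) {ε K t : ℝ} (hε : 0 < ε) (hK : 1 / r < K)
    (hst : s ≤ t) (hcond : ε + K * (t - s) ≤ π - ε) :
    Real.cos (ε + K * (t - s)) < ψ t := by
  by_contra hcon
  push_neg at hcon
  have hK0 : 0 < K := lt_trans (by positivity) hK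
  set c : ℝ → ℝ := fun x => Real.cos (ε + K * (x - s)) with hc
  have hcderiv : ∀ x, HasDerivAt c (-Real.sin (ε + K * (x - s)) * K) x := by
    intro x
    have h1 : HasDerivAt (fun x : ℝ => ε + K * (x - s)) K x := by
      simpa using (((hasDerivAt_id x).sub_const s).const_mul K).const_add ε
    exact (Real.hasDerivAt_cos (ε + K * (x - s))).comp x h1
  have hψcont : Continuous ψ :=
    continuous_iff_continuousAt.2 fun x => (hψ x).continuousAt
  have hccont : Continuous c :=
    continuous_iff_continuousAt.2 fun x => (hcderiv x).continuousAt
  -- ε ≤ π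
  have hεπ : ε ≤ π := by nlinarith [mul_nonneg hK0.le (sub_nonneg.2 hst)]
  have hcs : c s < ψ s := by
    have : Real.cos ε < Real.cos 0 :=
      Real.cos_lt_cos_of_nonneg_of_le_pi le_rfl hεπ hε
    simpa [hc, hψs] using this.trans_le (by simp [Real.cos_zero])
  -- the set where ψ ≤ c
  set A : Set ℝ := Set.Icc s t ∩ {x | ψ x ≤ c x} with hA
  have hAne : A.Nonempty := ⟨t, ⟨hst, le_rfl⟩, hcon⟩
  have hAclosed : IsClosed A := isClosed_Icc.inter (isClosed_le hψcont hccont)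
  have hAbdd : BddBelow A := ⟨s, fun x hx => hx.1.1⟩
  set t₁ := sInf A with ht₁
  have ht₁A : t₁ ∈ A := hAclosed.csInf_mem hAne hAbdd
  have hst₁ : s < t₁ := by
    rcases lt_or_eq_of_le ht₁A.1.1 with h | h
    · exact h
    · exact absurd ht₁A.2 (by rw [← h]; exact not_le.2 hcs)
  have hmin : ∀ x ∈ Set.Ico s t₁, c x < ψ x := by
    intro x hx
    by_contra hcx
    push_neg at hcx
    have : x ∈ A := ⟨⟨hx.1, hx.2.le.trans ht₁A.1.2⟩, hcx⟩
    exact absurd (csInf_le hAbdd this) (not_le.2 hx.2)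
  -- equality at t₁
  have heq : ψ t₁ = c t₁ := by
    refine le_antisymm ht₁A.2 ?_
    have h1 : Filter.Tendsto (fun x => ψ x - c x) (nhdsWithin t₁ (Set.Iio t₁))
        (nhds (ψ t₁ - c t₁)) :=
      ((hψcont.sub hccont).tendsto t₁).mono_left nhdsWithin_le_nhds
    have h2 : ∀ᶠ x in nhdsWithin t₁ (Set.Iio t₁), 0 ≤ ψ x - c x := by
      filter_upwards [Ioo_mem_nhdsLT_of_mem (Set.mem_Ioc.2 ⟨hst₁, le_rfl⟩)] with x hx
      exact sub_nonneg.2 (hmin x ⟨hx.1.le, hx.2⟩).le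
    have := ge_of_tendsto h1 h2
    linarith [this]
  -- derivative of ψ - c at t₁ is nonpositive
  set θ₁ := ε + K * (t₁ - s) with hθ₁
  set D := ψ' t₁ + Real.sin θ₁ * K with hD
  have hdD : HasDerivAt (fun x => ψ x - c x) D t₁ := by
    have h2 : HasDerivAt (fun x => ψ x - c x) (ψ' t₁ - -Real.sin θ₁ * K) t₁ :=
      (hψ t₁).sub (hcderiv t₁)
    rw [hD]; convert h2 using 1; ring
  have hDnonpos : D ≤ 0 := by
    have hslope : Filter.Tendsto (slope (fun x => ψ x - c x) t₁)
        (nhdsWithin t₁ (Set.Iio t₁)) (nhds D) :=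
      (hasDerivAt_iff_tendsto_slope.1 hdD).mono_left
        (nhdsWithin_mono t₁ fun x hx => ne_of_lt hx)
    refine le_of_tendsto hslope ?_
    filter_upwards [Ioo_mem_nhdsLT_of_mem (Set.mem_Ioc.2 ⟨hst₁, le_rfl⟩)] with x hx
    have hnum : 0 ≤ ψ x - c x := sub_nonneg.2 (hmin x ⟨hx.1.le, hx.2⟩).le
    have hden : x - t₁ < 0 := sub_neg.2 hx.2
    rw [slope_def_field]
    have : ψ t₁ - c t₁ = 0 := by rw [heq]; ring
    rw [div_nonpos_iff]
    left
    constructor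
    · linarith
    · linarith
  -- but D > 0
  have hθ₁pos : 0 < θ₁ := by
    have : 0 ≤ K * (t₁ - s) := mul_nonneg hK0.le (sub_nonneg.2 hst₁.le)
    linarith
  have hθ₁lt : θ₁ < π := by
    have : K * (t₁ - s) ≤ K * (t - s) :=
      mul_le_mul_of_nonneg_left (by linarith [ht₁A.1.2]) hK0.le
    linarith
  have hsinpos : 0 < Real.sin θ₁ := Real.sin_pos_of_pos_of_lt_pi hθ₁pos hθ₁lt
  have hψ'bound : -(1 / r) * Real.sin θ₁ ≤ ψ' t₁ := by
    have h1 := hd t₁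
    have h2 : ψ t₁ = Real.cos θ₁ := by rw [heq]
    have h3 : 1 - ψ t₁ ^ 2 = Real.sin θ₁ ^ 2 := by
      rw [h2]; nlinarith [Real.sin_sq_add_cos_sq θ₁]
    rw [h3, Real.sqrt_sq hsinpos.le] at h1
    have := abs_le.1 h1
    linarith [this.1]
  have : 0 < D := by
    have : (K - 1 / r) * Real.sin θ₁ ≤ D := by
      rw [hD]; nlinarith
    nlinarith [mul_pos (sub_pos.2 hK) hsinpos]
  linarith

/-- Comparison lemma: if `ψ s = 1`, `ψ ≥ -1` and `|ψ'| ≤ (1/r)√(1-ψ²)`, then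
`ψ t ≥ cos ((t-s)/r)` for `s ≤ t ≤ s + πr`. -/
lemma aux_compA {r : ℝ} (hr : 0 < r) {ψ ψ' : ℝ → ℝ}
    (hψ : ∀ x, HasDerivAt ψ (ψ' x) x)
    (hd : ∀ x, |ψ' x| ≤ (1 / r) * Real.sqrt (1 - ψ x ^ 2))
    {s : ℝ} (hψs : ψ s = 1) (hb : ∀ x, -1 ≤ ψ x) {t : ℝ}
    (hst : s ≤ t) (hts : t - s ≤ π * r) :
    Real.cos ((t - s) / r) ≤ ψ t := by
  rcases lt_or_eq_of_le hts with hlt | heq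
  · -- limiting argument over ε → 0⁺
    have hcont : Continuous fun ε : ℝ => Real.cos (ε + (1 / r + ε) * (t - s)) := by
      continuity
    have htend : Filter.Tendsto
        (fun ε : ℝ => Real.cos (ε + (1 / r + ε) * (t - s)))
        (nhdsWithin 0 (Set.Ioi 0)) (nhds (Real.cos ((t - s) / r))) := by
      have h := (hcont.tendsto 0).mono_left (nhdsWithin_le_nhds (s := Set.Ioi 0))
      have heq0 : (0:ℝ) + (1 / r + 0) * (t - s) = (t - s) / r := by field_simp; ring
      rwa [heq0] at h
    refine le_of_tendsto htend ?_
    have h0mem : (0:ℝ) ∈ {ε : ℝ | ε + (1 / r + ε) * (t - s) < π - ε} := by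
      simp only [Set.mem_setOf_eq]
      have h1 : (1 / r) * (t - s) < π := by
        rw [one_div, inv_mul_eq_div, div_lt_iff₀ hr]; linarith
      linarith
    have hopen : {ε : ℝ | ε + (1 / r + ε) * (t - s) < π - ε} ∈ nhds (0:ℝ) :=
      (isOpen_lt (by continuity) (by continuity)).mem_nhds h0mem
    filter_upwards [self_mem_nhdsWithin, mem_nhdsWithin_of_mem_nhds hopen] with ε hε1 hε2
    exact (aux_compB hr hψ hd hψs (Set.mem_Ioi.1 hε1)
      (by linarith [Set.mem_Ioi.1 hε1]) hst (le_of_lt hε2)).le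
  · have : (t - s) / r = π := by rw [heq]; field_simp
    rw [this, Real.cos_pi]
    exact hb t

/-- Key curve inequality: `⟪γ'(s), γ'(t)⟫ ≥ cos ((t-s)/r)`. -/
lemma aux_key {n : ℕ} {r : ℝ} (hr : 0 < r) {γ : ℝ → EuclideanSpace ℝ (Fin n)}
    (hγ : ContDiff ℝ 2 γ) (hspeed : ∀ t : ℝ, ‖deriv γ t‖ = 1)
    (hcurv : ∀ t : ℝ, ‖deriv (deriv γ) t‖ ≤ 1 / r) :
    ∀ s t : ℝ, s ≤ t → t - s ≤ π * r →
      Real.cos ((t - s) / r) ≤ ⟪deriv γ s, deriv γ t⟫ := by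
  have hγd : Differentiable ℝ γ := hγ.differentiable two_ne_zero
  have hγ1 : ContDiff ℝ 1 (deriv γ) := by
    have h : ContDiff ℝ ((1 : ℕ) + 1) γ := by exact_mod_cast hγ
    exact (contDiff_succ_iff_deriv.mp h).2.2
  have hγ'' : Differentiable ℝ (deriv γ) := hγ1.differentiable one_ne_zero
  have horth : ∀ x : ℝ, ⟪deriv γ x, deriv (deriv γ) x⟫ = 0 := by
    intro x
    have h1 : HasDerivAt (fun z => ⟪deriv γ z, deriv γ z⟫)
        (⟪deriv γ x, deriv (deriv γ) x⟫ + ⟪deriv (deriv γ) x, deriv γ x⟫) x :=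
      ((hγ'' x).hasDerivAt).inner ℝ ((hγ'' x).hasDerivAt)
    have h2 : HasDerivAt (fun z => ⟪deriv γ z, deriv γ z⟫) 0 x := by
      have hconst : (fun z => ⟪deriv γ z, deriv γ z⟫) = fun _ => (1:ℝ) := by
        funext z
        rw [real_inner_self_eq_norm_mul_norm, hspeed z]
        norm_num
      rw [hconst]
      exact hasDerivAt_const x 1
    have h3 := h1.unique h2
    have h4 : ⟪deriv (deriv γ) x, deriv γ x⟫ = ⟪deriv γ x, deriv (deriv γ) x⟫ :=
      real_inner_comm _ _
    rw [h4] at h3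
    linarith
  intro s t hst hts
  set u := deriv γ s with hu
  set ψ : ℝ → ℝ := fun x => ⟪u, deriv γ x⟫ with hψdef
  set ψ' : ℝ → ℝ := fun x => ⟪u, deriv (deriv γ) x⟫ with hψ'def
  have hψd : ∀ x, HasDerivAt ψ (ψ' x) x := by
    intro x
    have := (hasDerivAt_const x u).inner ℝ ((hγ'' x).hasDerivAt)
    simpa [hψdef, hψ'def] using this
  have hnu : ‖u‖ = 1 := hspeed s
  have habs : ∀ x, |ψ x| ≤ 1 := by
    intro x
    have := abs_real_inner_le_norm u (deriv γ x)
    simpa [hnu, hspeed x] using this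
  have hd : ∀ x, |ψ' x| ≤ (1 / r) * Real.sqrt (1 - ψ x ^ 2) := by
    intro x
    set v := deriv γ x with hv
    set a := deriv (deriv γ) x with ha
    set w := u - ψ x • v with hwdef
    have hva : ⟪v, a⟫ = 0 := horth x
    have hwa : ⟪u, a⟫ = ⟪w, a⟫ := by
      rw [hwdef, inner_sub_left, real_inner_smul_left, hva]
      ring
    have huu : ⟪u, u⟫ = 1 := by
      rw [real_inner_self_eq_norm_mul_norm, hnu]; norm_num
    have hvv : ⟪v, v⟫ = 1 := by
      rw [real_inner_self_eq_norm_mul_norm, hv, hspeed x]; norm_num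
    have huv : ⟪u, v⟫ = ψ x := rfl
    have hvu : ⟪v, u⟫ = ψ x := by rw [real_inner_comm]
    have hw2 : ‖w‖ ^ 2 = 1 - ψ x ^ 2 := by
      rw [← real_inner_self_eq_norm_sq, hwdef, inner_sub_left, inner_sub_right,
        inner_sub_right, real_inner_smul_left, real_inner_smul_left,
        real_inner_smul_right, real_inner_smul_right, huu, hvv, huv, hvu]
      ring
    have hnormw : ‖w‖ = Real.sqrt (1 - ψ x ^ 2) := by
      rw [← hw2, Real.sqrt_sq (norm_nonneg w)]
    have hψ'x : ψ' x = ⟪u, a⟫ := rfl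
    calc |ψ' x| = |⟪w, a⟫| := by rw [hψ'x, hwa]
      _ ≤ ‖w‖ * ‖a‖ := abs_real_inner_le_norm w a
      _ ≤ Real.sqrt (1 - ψ x ^ 2) * (1 / r) := by
          rw [hnormw]
          exact mul_le_mul_of_nonneg_left (hcurv x) (Real.sqrt_nonneg _)
      _ = (1 / r) * Real.sqrt (1 - ψ x ^ 2) := mul_comm _ _
  have hψs : ψ s = 1 := by
    have : ψ s = ⟪u, u⟫ := rfl
    rw [this, real_inner_self_eq_norm_mul_norm, hnu]; norm_num
  exact aux_compA hr hψd hd hψs (fun x => (abs_le.1 (habs x)).1) hst hts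

/-- A complete C² unit-speed curve `γ : ℝ → ℝⁿ` with curvature at most `1/r` has
extrinsic diameter at least `2r`: there are parameters `s, t` with
`‖γ s - γ t‖ ≥ 2r`; indeed `‖γ (πr) - γ 0‖ ≥ 2r`. -/
theorem curve_with_small_curvature_has_large_diameter {n : ℕ} (r : ℝ) (hr : 0 < r)
    (γ : ℝ → EuclideanSpace ℝ (Fin n))
    (hγ : ContDiff ℝ 2 γ)
    (hspeed : ∀ t : ℝ, ‖deriv γ t‖ = 1)
    (hcurv : ∀ t : ℝ, ‖deriv (deriv γ) t‖ ≤ 1 / r) :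
    (∃ s t : ℝ, 2 * r ≤ ‖γ s - γ t‖) ∧ 2 * r ≤ ‖γ (π * r) - γ 0‖ := by
  have key := aux_key hr hγ hspeed hcurv
  have hγd : Differentiable ℝ γ := hγ.differentiable two_ne_zero
  have hγ1 : ContDiff ℝ 1 (deriv γ) := by
    have h : ContDiff ℝ ((1 : ℕ) + 1) γ := by exact_mod_cast hγ
    exact (contDiff_succ_iff_deriv.mp h).2.2
  have hγ'cont : Continuous (deriv γ) := hγ1.continuous
  set L := π * r with hL
  have hLpos : 0 < L := by positivity
  set u := deriv γ (π * r / 2) with hu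
  have hcontψ : Continuous fun x => ⟪u, deriv γ x⟫ :=
    continuous_const.inner hγ'cont
  have hcontc : Continuous fun x : ℝ => Real.cos ((x - π * r / 2) / r) := by
    continuity
  -- pointwise bound
  have hpt : ∀ x ∈ Set.Icc (0:ℝ) L,
      Real.cos ((x - π * r / 2) / r) ≤ ⟪u, deriv γ x⟫ := by
    intro x hx
    rcases le_total x (π * r / 2) with h | h
    · have h1 := key x (π * r / 2) h (by nlinarith [hx.1, pi_pos])
      have h2 : Real.cos ((x - π * r / 2) / r) = Real.cos ((π * r / 2 - x) / r) := by
        rw [← Real.cos_neg ((x - π * r / 2) / r), ← neg_div, neg_sub]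
      rw [h2, real_inner_comm]
      exact h1
    · have h1 := key (π * r / 2) x h (by nlinarith [hx.2, pi_pos])
      exact h1
  -- fundamental theorem of calculus
  have hint : IntervalIntegrable (deriv γ) MeasureTheory.volume 0 L :=
    hγ'cont.intervalIntegrable 0 L
  have hfund : ∫ x in (0:ℝ)..L, deriv γ x = γ L - γ 0 :=
    intervalIntegral.integral_deriv_eq_sub (fun x _ => hγd.differentiableAt) hint
  have hCLM : ∫ x in (0:ℝ)..L, ⟪u, deriv γ x⟫ = ⟪u, γ L - γ 0⟫ := by
    have h := ContinuousLinearMap.intervalIntegral_comp_comm (innerSL ℝ u) hint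
    rw [hfund] at h
    simp only [innerSL_apply_apply] at h
    exact h
  -- model integral
  have hmodel : ∫ x in (0:ℝ)..L, Real.cos ((x - π * r / 2) / r) = 2 * r := by
    have hF : ∀ x : ℝ, HasDerivAt (fun y => r * Real.sin ((y - π * r / 2) / r))
        (Real.cos ((x - π * r / 2) / r)) x := by
      intro x
      have h1 : HasDerivAt (fun y : ℝ => (y - π * r / 2) / r) (1 / r) x := by
        simpa [one_div] using
          (((hasDerivAt_id x).sub_const (π * r / 2)).div_const r)
      have h2 := (Real.hasDerivAt_sin ((x - π * r / 2) / r)).comp x h1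
      have h3 := h2.const_mul r
      have heq : r * (Real.cos ((x - π * r / 2) / r) * (1 / r))
          = Real.cos ((x - π * r / 2) / r) := by field_simp
      rw [← heq]
      exact h3
    rw [intervalIntegral.integral_eq_sub_of_hasDerivAt (fun x _ => hF x)
      (hcontc.intervalIntegrable 0 L)]
    have e1 : (L - π * r / 2) / r = π / 2 := by
      rw [hL]; field_simp; ring
    have e2 : ((0:ℝ) - π * r / 2) / r = -(π / 2) := by
      field_simp; ring
    rw [e1, e2, Real.sin_neg, Real.sin_pi_div_two]
    ring
  have hmono := intervalIntegral.integral_mono_on (μ := MeasureTheory.volume) hLpos.le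
    (hcontc.intervalIntegrable 0 L) (hcontψ.intervalIntegrable 0 L) hpt
  have h2r : 2 * r ≤ ⟪u, γ L - γ 0⟫ := by
    rw [← hCLM, ← hmodel]
    exact hmono
  have hfin : 2 * r ≤ ‖γ (π * r) - γ 0‖ := by
    have hCS : ⟪u, γ L - γ 0⟫ ≤ ‖u‖ * ‖γ L - γ 0‖ := real_inner_le_norm u _
    rw [hu, hspeed, one_mul] at hCS
    calc 2 * r ≤ ⟪u, γ L - γ 0⟫ := h2r
      _ ≤ ‖γ L - γ 0‖ := hCS
  exact ⟨⟨π * r, 0, hfin⟩, hfin⟩
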